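/- For the Greater Than Mean problem, no fixed priority algorithm without advice can make fewer than (1/2 − ε)n mistakes for any ε ∈ (0, 1/2] on all inputs, for large enough n. Formally: for every injective priority function P : ℚ × ℕ → ℝ, every decision map D : List (ℚ × ℕ) → (ℚ × ℕ) → Bool, and every ε ∈ (0, 1/2], for all sufficiently large n there exists an input of n items (with pairwise distinct identifiers) such that, when the items are presented in decreasing order of P and the answer to each item is D applied to the list of earlier items and the current item, at least (1/2 − ε)n of the answers are incorrect. -/

import Mathlib

/-- An input item for Greater Than Mean: a value together with an identifier. -/
abbrev GTMItem := ℚ × ℕ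

/-- The mean of the values of an input to Greater Than Mean. -/
def gtmMean (l : List GTMItem) : ℚ := (l.map Prod.fst).sum / l.length

/-- The correct answer for an item: `true` iff its value exceeds the mean of the input. -/
def gtmCorrect (l : List GTMItem) (x : GTMItem) : Bool := decide (gtmMean l < x.1)

namespace GTMAux
open Classical

variable {P : GTMItem → ℝ}

lemma inf_above (q : ℚ) (h : ∀ t : ℝ, ∃ i : ℕ, t < P (q, i)) (t : ℝ) :
    {i : ℕ | t < P (q, i)}.Infinite := by
  by_contra hfin
  rw [Set.not_infinite] at hfin
  obtain ⟨b, hb⟩ := (hfin.image (fun i => P (q, i))).bddAbove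
  obtain ⟨i, hi⟩ := h (max t b)
  have h1 : t < P (q, i) := lt_of_le_of_lt (le_max_left _ _) hi
  have h2 : P (q, i) ≤ b := hb (Set.mem_image_of_mem _ h1)
  exact absurd (hi.trans_le h2) (not_lt.2 (le_max_right t b))

lemma inf_below (q : ℚ) (h : ∀ t : ℝ, ∃ i : ℕ, P (q, i) < t) (t : ℝ) :
    {i : ℕ | P (q, i) < t}.Infinite := by
  by_contra hfin
  rw [Set.not_infinite] at hfin
  obtain ⟨b, hb⟩ := (hfin.image (fun i => P (q, i))).bddBelow
  obtain ⟨i, hi⟩ := h (min t b)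
  have h1 : P (q, i) < t := lt_of_lt_of_le hi (min_le_left _ _)
  have h2 : b ≤ P (q, i) := hb (Set.mem_image_of_mem _ h1)
  exact absurd (lt_of_le_of_lt h2 hi) (not_lt.2 (min_le_right t b))

lemma exists_fun {s : Set ℕ} (hs : s.Infinite) (m : ℕ) :
    ∃ e : Fin m → ℕ, Function.Injective e ∧ ∀ i, e i ∈ s := by
  obtain ⟨t, hts, hcard⟩ := hs.exists_subset_card_eq m
  have eqv := t.equivFinOfCardEq hcard
  refine ⟨fun i => (eqv.symm i : ℕ), ?_, fun i => hts (eqv.symm i).2⟩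
  intro i j hij
  have : (eqv.symm i) = eqv.symm j := Subtype.ext hij
  simpa using eqv.symm.injective this

noncomputable def fcl (P : GTMItem → ℝ) (q : ℚ) : ℝ := sInf (Set.range fun j : ℕ => P (q, j))

noncomputable def thcl (P : GTMItem → ℝ) (q : ℚ) : ℝ :=
  sSup {t : ℝ | {i : ℕ | t < P (q, i)}.Infinite}

lemma exists_below_of_fcl_lt {q : ℚ} {t : ℝ} (h : fcl P q < t) : ∃ j : ℕ, P (q, j) < t := by
  have hne : (Set.range fun j : ℕ => P (q, j)).Nonempty := ⟨P (q, 0), 0, rfl⟩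
  obtain ⟨x, hx, hxt⟩ := exists_lt_of_csInf_lt hne h
  obtain ⟨j, rfl⟩ := hx
  exact ⟨j, hxt⟩

lemma fcl_le {q : ℚ} (hbb : ∃ t : ℝ, ∀ j : ℕ, t ≤ P (q, j)) (j : ℕ) : fcl P q ≤ P (q, j) := by
  obtain ⟨t, ht⟩ := hbb
  exact csInf_le ⟨t, fun x ⟨i, hi⟩ => hi ▸ ht i⟩ ⟨j, rfl⟩

lemma T_nonempty {q : ℚ} (hbb : ∃ t : ℝ, ∀ j : ℕ, t ≤ P (q, j)) :
    {t : ℝ | {i : ℕ | t < P (q, i)}.Infinite}.Nonempty := by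
  obtain ⟨t, ht⟩ := hbb
  refine ⟨t - 1, ?_⟩
  have : {i : ℕ | t - 1 < P (q, i)} = Set.univ :=
    Set.eq_univ_of_forall fun i => lt_of_lt_of_le (by linarith) (ht i)
  rw [Set.mem_setOf_eq, this]
  exact Set.infinite_univ

lemma T_bddAbove {q : ℚ} (hub : ∃ b : ℝ, ∀ i : ℕ, P (q, i) ≤ b) :
    BddAbove {t : ℝ | {i : ℕ | t < P (q, i)}.Infinite} := by
  obtain ⟨b, hb⟩ := hub
  refine ⟨b, fun t ht => ?_⟩
  obtain ⟨i, hi⟩ := ht.nonempty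
  exact le_trans hi.le (hb i)

lemma fcl_le_thcl {q : ℚ} (hbb : ∃ t : ℝ, ∀ j : ℕ, t ≤ P (q, j))
    (hub : ∃ b : ℝ, ∀ i : ℕ, P (q, i) ≤ b) : fcl P q ≤ thcl P q := by
  by_contra hlt
  push_neg at hlt
  set t := (thcl P q + fcl P q) / 2 with hts
  have h1 : t < fcl P q := by rw [hts]; linarith
  have h2 : thcl P q < t := by rw [hts]; linarith
  have hmem : t ∈ {t : ℝ | {i : ℕ | t < P (q, i)}.Infinite} := by
    have : {i : ℕ | t < P (q, i)} = Set.univ :=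
      Set.eq_univ_of_forall fun i => lt_of_lt_of_le h1 (fcl_le hbb i)
    rw [Set.mem_setOf_eq, this]
    exact Set.infinite_univ
  exact absurd (le_csSup (T_bddAbove hub) hmem) (not_le.2 h2)

lemma inf_above_of_lt_thcl {q : ℚ} {t : ℝ} (hbb : ∃ t : ℝ, ∀ j : ℕ, t ≤ P (q, j))
    (h : t < thcl P q) : {i : ℕ | t < P (q, i)}.Infinite := by
  obtain ⟨t', ht'T, htt'⟩ := exists_lt_of_lt_csSup (T_nonempty hbb) h
  exact ht'T.mono fun i hi => lt_trans htt' hi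

lemma fin_above_of_thcl_lt {q : ℚ} {t : ℝ} (hub : ∃ b : ℝ, ∀ i : ℕ, P (q, i) ≤ b)
    (h : thcl P q < t) : {i : ℕ | t < P (q, i)}.Finite := by
  by_contra hfin
  rw [← Set.not_infinite] at hfin
  push_neg at hfin
  exact absurd (le_csSup (T_bddAbove hub) hfin) (not_le.2 h)

lemma count_aux (D : List GTMItem → GTMItem → Bool) {m : ℕ}
    (l₁ l₂ : List GTMItem) (g : Fin m → ℕ)
    (hg : Function.Injective g)
    (h₁ : ∀ p, g p < l₁.length) (h₂ : ∀ p, g p < l₂.length)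
    (hx : ∀ p : Fin m,
      l₁.get ⟨g p, h₁ p⟩ = l₂.get ⟨g p, h₂ p⟩ ∧
      l₁.take (g p) = l₂.take (g p) ∧
      gtmCorrect l₁ (l₁.get ⟨g p, h₁ p⟩) = true ∧
      gtmCorrect l₂ (l₂.get ⟨g p, h₂ p⟩) = false) :
    m ≤ ((Finset.univ.filter (fun i : Fin l₁.length =>
            D (l₁.take (i : ℕ)) (l₁.get i) ≠ gtmCorrect l₁ (l₁.get i))).card +
         (Finset.univ.filter (fun i : Fin l₂.length =>
            D (l₂.take (i : ℕ)) (l₂.get i) ≠ gtmCorrect l₂ (l₂.get i))).card) := by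
  classical
  set F₁ := Finset.univ.filter (fun i : Fin l₁.length =>
      D (l₁.take (i : ℕ)) (l₁.get i) ≠ gtmCorrect l₁ (l₁.get i)) with hF₁
  set F₂ := Finset.univ.filter (fun i : Fin l₂.length =>
      D (l₂.take (i : ℕ)) (l₂.get i) ≠ gtmCorrect l₂ (l₂.get i)) with hF₂
  set s₁ := Finset.univ.filter
      (fun p : Fin m => D (l₁.take (g p)) (l₁.get ⟨g p, h₁ p⟩) = true) with hs₁
  have hsplit : s₁.card + s₁ᶜ.card = m := by
    rw [Finset.card_add_card_compl, Fintype.card_fin]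
  have hc1 : s₁ᶜ.card ≤ F₁.card := by
    apply Finset.card_le_card_of_injOn (fun p => (⟨g p, h₁ p⟩ : Fin l₁.length))
    · intro p hp
      rw [Finset.mem_coe, Finset.mem_compl, hs₁, Finset.mem_filter] at hp
      have hfalse : D (l₁.take (g p)) (l₁.get ⟨g p, h₁ p⟩) = false := by
        rcases Bool.eq_false_or_eq_true (D (l₁.take (g p)) (l₁.get ⟨g p, h₁ p⟩)) with h | h
        · exact absurd ⟨Finset.mem_univ _, h⟩ hp
        · exact h
      rw [Finset.mem_coe, hF₁, Finset.mem_filter]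
      refine ⟨Finset.mem_univ _, ?_⟩
      have := (hx p).2.2.1
      simp only [Fin.val_mk] at *
      rw [hfalse, this]
      simp
    · intro p _ p' _ hpp
      exact hg (congrArg Fin.val hpp)
  have hc2 : s₁.card ≤ F₂.card := by
    apply Finset.card_le_card_of_injOn (fun p => (⟨g p, h₂ p⟩ : Fin l₂.length))
    · intro p hp
      rw [hs₁, Finset.mem_coe, Finset.mem_filter] at hp
      rw [Finset.mem_coe, hF₂, Finset.mem_filter]
      refine ⟨Finset.mem_univ _, ?_⟩
      obtain ⟨hget, htake, _, hcor⟩ := hx p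
      have : D (l₂.take (g p)) (l₂.get ⟨g p, h₂ p⟩) = true := by
        rw [← hget, ← htake]; exact hp.2
      simp only [Fin.val_mk]
      rw [this, hcor]
      simp
    · intro p _ p' _ hpp
      exact hg (congrArg Fin.val hpp)
  omega

lemma key' (hP : Function.Injective P) (m : ℕ) :
    ∃ (v : ℚ) (e : Fin m → ℕ) (a b : GTMItem),
      Function.Injective e ∧ a.1 < b.1 ∧
      (∀ i, P a < P (v, e i)) ∧ (∀ i, P b < P (v, e i)) ∧
      (∀ i, a.2 ≠ e i) ∧ (∀ i, b.2 ≠ e i) := by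
  rcases Nat.eq_zero_or_pos m with rfl | hm
  · refine ⟨0, fun i => i.elim0, ((0:ℚ), 0), ((1:ℚ), 0), ?_, by norm_num,
      fun i => i.elim0, fun i => i.elim0, fun i => i.elim0, fun i => i.elim0⟩
    intro i
    exact i.elim0
  by_cases h1 : ∃ v : ℚ, ∀ t : ℝ, ∃ i : ℕ, t < P (v, i)
  · obtain ⟨v, hv⟩ := h1
    set a : GTMItem := ((0:ℚ), 0) with ha
    set b : GTMItem := ((1:ℚ), 0) with hb
    set t₀ : ℝ := max (P a) (P b) with ht₀
    have hinf : ({i : ℕ | t₀ < P (v, i)} \ {0}).Infinite :=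
      (inf_above v hv t₀).diff (Set.finite_singleton 0)
    obtain ⟨e, he, hes⟩ := exists_fun hinf m
    refine ⟨v, e, a, b, he, by norm_num [ha, hb], ?_, ?_, ?_, ?_⟩
    · intro i
      exact lt_of_le_of_lt (le_max_left _ _) (hes i).1
    · intro i
      exact lt_of_le_of_lt (le_max_right _ _) (hes i).1
    · intro i
      exact fun h0 => (hes i).2 (by simp [ha] at h0 ⊢; omega)
    · intro i
      exact fun h0 => (hes i).2 (by simp [hb] at h0 ⊢; omega)
  by_cases h2 : ∃ q₁ q₂ : ℚ, q₁ < q₂ ∧ (∀ t : ℝ, ∃ j : ℕ, P (q₁, j) < t) ∧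
      (∀ t : ℝ, ∃ j : ℕ, P (q₂, j) < t)
  · obtain ⟨q₁, q₂, hq, hu₁, hu₂⟩ := h2
    set e : Fin m → ℕ := fun i => (i : ℕ) with he'
    have he : Function.Injective e := fun i j h => Fin.ext h
    have hne : (Finset.univ.image (fun i : Fin m => P ((0:ℚ), (i : ℕ)))).Nonempty :=
      (Finset.univ_nonempty_iff.2 (Fin.pos_iff_nonempty.1 hm)).image _
    set ρ : ℝ := (Finset.univ.image (fun i : Fin m => P ((0:ℚ), (i : ℕ)))).min' hne with hρ
    have hρle : ∀ i : Fin m, ρ ≤ P ((0:ℚ), (i : ℕ)) := fun i =>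
      Finset.min'_le _ _ (Finset.mem_image_of_mem _ (Finset.mem_univ i))
    have hinf₁ : ({j : ℕ | P (q₁, j) < ρ} \ Set.range e).Infinite :=
      (inf_below q₁ hu₁ ρ).diff (Set.finite_range e)
    have hinf₂ : ({j : ℕ | P (q₂, j) < ρ} \ Set.range e).Infinite :=
      (inf_below q₂ hu₂ ρ).diff (Set.finite_range e)
    obtain ⟨j₁, hj₁, hj₁r⟩ := hinf₁.nonempty
    obtain ⟨j₂, hj₂, hj₂r⟩ := hinf₂.nonempty
    refine ⟨0, e, (q₁, j₁), (q₂, j₂), he, hq, ?_, ?_, ?_, ?_⟩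
    · intro i
      exact lt_of_lt_of_le hj₁ (hρle i)
    · intro i
      exact lt_of_lt_of_le hj₂ (hρle i)
    · intro i h
      exact hj₁r ⟨i, h.symm⟩
    · intro i h
      exact hj₂r ⟨i, h.symm⟩
  -- Case 3
  push_neg at h1
  have hba : ∀ v : ℚ, ∃ b : ℝ, ∀ i : ℕ, P (v, i) ≤ b := h1
  set bb : ℚ → Prop := fun q => ∃ t : ℝ, ∀ j : ℕ, t ≤ P (q, j) with hbbdef
  have hone : ∀ q q' : ℚ, ¬ bb q → ¬ bb q' → q = q' := by
    intro q q' hq hq'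
    have hq2 : ∀ t : ℝ, ∃ j : ℕ, P (q, j) < t := by
      intro t
      by_contra hc
      push_neg at hc
      exact hq ⟨t, hc⟩
    have hq'2 : ∀ t : ℝ, ∃ j : ℕ, P (q', j) < t := by
      intro t
      by_contra hc
      push_neg at hc
      exact hq' ⟨t, hc⟩
    rcases lt_trichotomy q q' with h | h | h
    · exact absurd ⟨q, q', h, hq2, hq'2⟩ h2
    · exact h
    · exact absurd ⟨q', q, h, hq'2, hq2⟩ h2
  obtain ⟨q0, hq0⟩ : ∃ q0 : ℚ, ∀ q : ℚ, q ≠ q0 → bb q := by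
    by_cases hex : ∃ q : ℚ, ¬ bb q
    · obtain ⟨q0, h⟩ := hex
      refine ⟨q0, fun q hne => ?_⟩
      by_contra hq
      exact hne (hone q q0 hq h)
    · push_neg at hex
      exact ⟨0, fun q _ => hex q⟩
  by_cases hii : ∃ v q₁ q₂ : ℚ, bb v ∧ q₁ < q₂ ∧
      fcl P q₁ < thcl P v ∧ fcl P q₂ < thcl P v
  · obtain ⟨v, q₁, q₂, hbv, hq12, hf₁, hf₂⟩ := hii
    set t : ℝ := (max (fcl P q₁) (fcl P q₂) + thcl P v) / 2 with htdef
    have hmt : max (fcl P q₁) (fcl P q₂) < thcl P v := max_lt hf₁ hf₂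
    have ht1 : max (fcl P q₁) (fcl P q₂) < t := by rw [htdef]; linarith
    have ht2 : t < thcl P v := by rw [htdef]; linarith
    obtain ⟨j₁, hj₁⟩ := exists_below_of_fcl_lt (lt_of_le_of_lt (le_max_left _ _) ht1)
    obtain ⟨j₂, hj₂⟩ := exists_below_of_fcl_lt (lt_of_le_of_lt (le_max_right _ _) ht1)
    have hinf : ({i : ℕ | t < P (v, i)} \ {j₁, j₂}).Infinite :=
      (inf_above_of_lt_thcl hbv ht2).diff ((Set.finite_singleton j₂).insert j₁)
    obtain ⟨e, he, hes⟩ := exists_fun hinf m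
    refine ⟨v, e, (q₁, j₁), (q₂, j₂), he, hq12, ?_, ?_, ?_, ?_⟩
    · intro i
      exact lt_trans hj₁ (hes i).1
    · intro i
      exact lt_trans hj₂ (hes i).1
    · intro i h
      exact (hes i).2 (by simp at h ⊢; exact Or.inl h.symm)
    · intro i h
      exact (hes i).2 (by simp at h ⊢; exact Or.inr h.symm)
  -- final subcase: four clustered values
  push_neg at hii
  set w : Fin 4 → ℚ := fun j => q0 + 1 + ((j : ℕ) : ℚ) with hwdef
  have hwbb : ∀ j : Fin 4, bb (w j) := by
    intro j
    apply hq0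
    have hj0 : (0:ℚ) ≤ ((j : ℕ) : ℚ) := Nat.cast_nonneg _
    rw [hwdef]
    intro hc
    simp only at hc
    linarith [hc]
  have hwmono : ∀ j j' : Fin 4, j < j' → w j < w j' := by
    intro j j' h
    simp only [hwdef]
    have : ((j : ℕ) : ℚ) < ((j' : ℕ) : ℚ) := Nat.cast_lt.2 h
    linarith
  have hfth : ∀ j : Fin 4, fcl P (w j) ≤ thcl P (w j) :=
    fun j => fcl_le_thcl (hwbb j) (hba _)
  obtain ⟨jm, hjm⟩ : ∃ jm : Fin 4, ∀ j : Fin 4, thcl P (w j) ≤ thcl P (w jm) := by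
    obtain ⟨jm, _, hjm⟩ := Finset.exists_max_image Finset.univ
      (fun j : Fin 4 => thcl P (w j)) ⟨0, Finset.mem_univ 0⟩
    exact ⟨jm, fun j => hjm j (Finset.mem_univ j)⟩
  set S : ℝ := thcl P (w jm) with hSdef
  have hexc : ∀ j j' : Fin 4, j < j' → fcl P (w j) < S → fcl P (w j') < S → False := by
    intro j j' hlt hj hj'
    exact absurd (hii (w jm) (w j) (w j') (hwbb jm) (hwmono j j' hlt) hj) (not_le.2 hj')
  have hleS : ∀ j : Fin 4, fcl P (w j) ≤ S := fun j => le_trans (hfth j) (hjm j)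
  have hgetS : ∀ j : Fin 4, ¬ fcl P (w j) < S → fcl P (w j) = S :=
    fun j h => le_antisymm (hleS j) (not_lt.1 h)
  have hthS : ∀ j : Fin 4, fcl P (w j) = S → thcl P (w j) = S :=
    fun j h => le_antisymm (hjm j) (h ▸ hfth j)
  have htriple : ∃ x y z : Fin 4, x < y ∧ y < z ∧
      fcl P (w x) = S ∧ fcl P (w y) = S ∧ fcl P (w z) = S := by
    by_cases c0 : fcl P (w 0) < S
    · exact ⟨1, 2, 3, by decide, by decide,
        hgetS 1 fun c => hexc 0 1 (by decide) c0 c,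
        hgetS 2 fun c => hexc 0 2 (by decide) c0 c,
        hgetS 3 fun c => hexc 0 3 (by decide) c0 c⟩
    · by_cases c1 : fcl P (w 1) < S
      · exact ⟨0, 2, 3, by decide, by decide, hgetS 0 c0,
          hgetS 2 fun c => hexc 1 2 (by decide) c1 c,
          hgetS 3 fun c => hexc 1 3 (by decide) c1 c⟩
      · by_cases c2 : fcl P (w 2) < S
        · exact ⟨0, 1, 3, by decide, by decide, hgetS 0 c0, hgetS 1 c1,
            hgetS 3 fun c => hexc 2 3 (by decide) c2 c⟩
        · exact ⟨0, 1, 2, by decide, by decide, hgetS 0 c0, hgetS 1 c1, hgetS 2 c2⟩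
  obtain ⟨x, y, z, hxy, hyz, hfx, hfy, hfz⟩ := htriple
  -- majority class: w y
  have hinfv : {i : ℕ | S < P (w y, i)}.Infinite := by
    have hsub : {i : ℕ | ¬ S < P (w y, i)} ⊆ {i : ℕ | P (w y, i) = S} := by
      intro i hi
      exact le_antisymm (not_lt.1 hi) (hfy ▸ fcl_le (hwbb y) i)
    have hss : {i : ℕ | P (w y, i) = S}.Subsingleton := by
      intro i hi i' hi'
      have := hP (show P (w y, i) = P (w y, i') from hi.trans hi'.symm)
      exact (Prod.ext_iff.1 this).2
    have hfin : {i : ℕ | ¬ S < P (w y, i)}.Finite := hss.finite.subset hsub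
    have heq : {i : ℕ | S < P (w y, i)} = {i : ℕ | ¬ S < P (w y, i)}ᶜ := by
      ext i
      simp
    rw [heq]
    exact hfin.infinite_compl
  obtain ⟨e, he, hes⟩ := exists_fun hinfv m
  have hne : (Finset.univ.image (fun i : Fin m => P (w y, e i))).Nonempty :=
    (Finset.univ_nonempty_iff.2 (Fin.pos_iff_nonempty.1 hm)).image _
  set ρ : ℝ := (Finset.univ.image (fun i : Fin m => P (w y, e i))).min' hne with hρdef
  have hρle : ∀ i : Fin m, ρ ≤ P (w y, e i) := fun i =>
    Finset.min'_le _ _ (Finset.mem_image_of_mem _ (Finset.mem_univ i))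
  have hρS : S < ρ := by
    obtain ⟨i₀, _, hi₀⟩ := Finset.mem_image.1 (Finset.min'_mem _ hne)
    rw [hρdef, ← hi₀]
    exact hes i₀
  have mkTail : ∀ q : ℚ, bb q → thcl P q = S →
      ({j : ℕ | P (q, j) < ρ} \ Set.range e).Infinite := by
    intro q hbq hthq
    have hmid : thcl P q < (S + ρ) / 2 := by rw [hthq]; linarith
    have hfin2 := fin_above_of_thcl_lt (hba q) hmid
    have hsub : {j : ℕ | ¬ P (q, j) < ρ} ⊆ {j : ℕ | (S + ρ) / 2 < P (q, j)} :=
      fun j hj => lt_of_lt_of_le (by linarith) (not_lt.1 hj)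
    have hfin3 : {j : ℕ | ¬ P (q, j) < ρ}.Finite := hfin2.subset hsub
    have heq : {j : ℕ | P (q, j) < ρ} = {j : ℕ | ¬ P (q, j) < ρ}ᶜ := by
      ext j
      simp
    rw [heq]
    exact (hfin3.infinite_compl).diff (Set.finite_range e)
  obtain ⟨j₁, hj₁, hj₁r⟩ := (mkTail (w x) (hwbb x) (hthS x hfx)).nonempty
  obtain ⟨j₂, hj₂, hj₂r⟩ := (mkTail (w z) (hwbb z) (hthS z hfz)).nonempty
  refine ⟨w y, e, (w x, j₁), (w z, j₂), he, hwmono x z (lt_trans hxy hyz), ?_, ?_, ?_, ?_⟩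
  · intro i
    exact lt_of_lt_of_le hj₁ (hρle i)
  · intro i
    exact lt_of_lt_of_le hj₂ (hρle i)
  · intro i h
    exact hj₁r ⟨i, h.symm⟩
  · intro i h
    exact hj₂r ⟨i, h.symm⟩

end GTMAux


/-- For Greater Than Mean, no fixed priority algorithm without advice can make
fewer than `(1/2 − ε)n` mistakes on all inputs, for any `ε ∈ (0, 1/2]` and
large enough `n`: for every injective priority function `P` and decision map
`D` there is, for all sufficiently large `n`, an input of `n` items with
pairwise distinct identifiers, presented in decreasing order of `P`, on which
at least `(1/2 − ε)n` answers are incorrect. -/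
theorem gtm_priority_no_advice_lower_bound
    (P : GTMItem → ℝ) (hP : Function.Injective P)
    (D : List GTMItem → GTMItem → Bool)
    (ε : ℝ) (hε0 : 0 < ε) (hε1 : ε ≤ 1 / 2) :
    ∃ N : ℕ, ∀ n : ℕ, N ≤ n →
      ∃ l : List GTMItem,
        l.length = n ∧
        (l.map Prod.snd).Nodup ∧
        l.Pairwise (fun u v => P v < P u) ∧
        (1 / 2 - ε) * (n : ℝ) ≤
          ((Finset.univ.filter (fun i : Fin l.length =>
            D (l.take (i : ℕ)) (l.get i) ≠ gtmCorrect l (l.get i))).card : ℝ) := by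
  classical
  refine ⟨⌈ε⁻¹⌉₊ + 2, fun n hn => ?_⟩
  have hn2 : 2 ≤ n := le_trans (by omega) hn
  set m := n - 2 with hmdef
  have hmn : m + 2 = n := by omega
  have hεn : (1 : ℝ) ≤ ε * n := by
    have h1 : (ε⁻¹ : ℝ) ≤ (⌈ε⁻¹⌉₊ : ℝ) := Nat.le_ceil _
    have h2 : ((⌈ε⁻¹⌉₊ + 2 : ℕ) : ℝ) ≤ (n : ℝ) := Nat.cast_le.2 hn
    have h3 : (ε⁻¹ : ℝ) ≤ n := by push_cast at h2; linarith
    calc (1:ℝ) = ε * ε⁻¹ := (mul_inv_cancel₀ hε0.ne').symm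
    _ ≤ ε * n := mul_le_mul_of_nonneg_left h3 hε0.le
  obtain ⟨v, e, a, b, he, hab, hpa, hpb, hia, hib⟩ := GTMAux.key' hP m
  -- choose c strictly between tail values, distinct from v
  obtain ⟨c, hc1, hc2, hcv⟩ : ∃ c : ℚ, a.1 < c ∧ c < b.1 ∧ c ≠ v := by
    by_cases h : (a.1 + b.1) / 2 = v
    · refine ⟨(a.1 + (a.1 + b.1) / 2) / 2, by linarith, by linarith, ?_⟩
      intro hc
      rw [← h] at hc
      have : a.1 = (a.1 + b.1) / 2 := by linarith
      linarith
    · exact ⟨(a.1 + b.1) / 2, by linarith, by linarith, h⟩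
  set wv : ℚ := 2 * v - c with hwvdef
  set forb : Finset ℕ := insert a.2 (insert b.2 (Finset.univ.image e)) with hforb
  set jw : ℕ := forb.sup id + 1 with hjwdef
  have hjwf : ∀ x ∈ forb, x ≠ jw := by
    intro x hx
    have := Finset.le_sup (f := id) hx
    simp only [id] at this
    omega
  have hjwa : a.2 ≠ jw := hjwf a.2 (Finset.mem_insert_self _ _)
  have hjwb : b.2 ≠ jw := hjwf b.2 (Finset.mem_insert_of_mem (Finset.mem_insert_self _ _))
  have hjwe : ∀ i : Fin m, e i ≠ jw := fun i => hjwf (e i)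
    (Finset.mem_insert_of_mem (Finset.mem_insert_of_mem
      (Finset.mem_image_of_mem _ (Finset.mem_univ i))))
  set W : GTMItem := (wv, jw) with hWdef
  -- the majority items
  set Mfun : Fin m → GTMItem := fun i => (v, e i) with hMfundef
  have hMinj : Function.Injective Mfun := by
    intro i j h
    exact he (congrArg Prod.snd h)
  set Mfin : Finset GTMItem := Finset.univ.image Mfun with hMfin
  have hMcard : Mfin.card = m := by
    rw [hMfin, Finset.card_image_of_injective _ hMinj, Finset.card_univ, Fintype.card_fin]
  haveI : IsTrans GTMItem (fun x y => P y ≤ P x) := ⟨fun _ _ _ h1 h2 => le_trans h2 h1⟩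
  haveI : IsAntisymm GTMItem (fun x y => P y ≤ P x) := ⟨fun _ _ h1 h2 => hP (le_antisymm h2 h1)⟩
  haveI : IsTotal GTMItem (fun x y => P y ≤ P x) := ⟨fun x y => (le_total (P y) (P x)).imp id id⟩
  set lm : List GTMItem := Mfin.sort (fun x y => P y ≤ P x) with hlmdef
  have hlmlen : lm.length = m := by rw [hlmdef, Finset.length_sort, hMcard]
  have hlmmem : ∀ x ∈ lm, ∃ i, x = Mfun i := by
    intro x hx
    rw [hlmdef, Finset.mem_sort, hMfin, Finset.mem_image] at hx
    obtain ⟨i, _, hi⟩ := hx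
    exact ⟨i, hi.symm⟩
  have hlmnd : lm.Nodup := Finset.sort_nodup _ _
  have hlmsorted : lm.Pairwise (fun x y => P y ≤ P x) := Finset.pairwise_sort _ _
  have hlmpair : lm.Pairwise (fun x y => P y < P x) := by
    have hand := List.Pairwise.and hlmsorted hlmnd
    refine hand.imp ?_
    rintro u u' ⟨h1, h2⟩
    exact lt_of_le_of_ne h1 fun heq => h2 (hP heq.symm)
  have hlmfst : ∀ x ∈ lm, x.1 = v := by
    intro x hx
    obtain ⟨i, rfl⟩ := hlmmem x hx
    rfl
  have hlma : ∀ x ∈ lm, P a < P x := by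
    intro x hx
    obtain ⟨i, rfl⟩ := hlmmem x hx
    exact hpa i
  have hlmb : ∀ x ∈ lm, P b < P x := by
    intro x hx
    obtain ⟨i, rfl⟩ := hlmmem x hx
    exact hpb i
  have hlmW : ∀ x ∈ lm, x ≠ W := by
    intro x hx
    obtain ⟨i, rfl⟩ := hlmmem x hx
    intro hc
    exact hjwe i (congrArg Prod.snd hc)
  have haW : a ≠ W := fun h => hjwa (congrArg Prod.snd h)
  have hbW : b ≠ W := fun h => hjwb (congrArg Prod.snd h)
  have hlmsum : (lm.map Prod.fst).sum = m * v := by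
    have hperm : lm.Perm Mfin.toList := Finset.sort_perm_toList _ _
    have h1 : (lm.map Prod.fst).sum = (Mfin.toList.map Prod.fst).sum :=
      (hperm.map Prod.fst).sum_eq
    rw [h1]
    have h2 : (Mfin.toList.map Prod.fst).sum = Mfin.sum Prod.fst := by
      rw [← Finset.sum_map_toList]
    rw [h2, hMfin, Finset.sum_image (fun i _ j _ h => hMinj h)]
    simp [hMfundef, Finset.sum_const, mul_comm]
  have finish : ∀ (l₁ l₂ : List GTMItem) (g : Fin m → ℕ),
      Function.Injective g →
      l₁.length = m + 2 → l₂.length = m + 2 →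
      (l₁.map Prod.snd).Nodup → (l₂.map Prod.snd).Nodup →
      l₁.Pairwise (fun u u' => P u' < P u) → l₂.Pairwise (fun u u' => P u' < P u) →
      (l₁.map Prod.fst).sum = m * v + wv + a.1 →
      (l₂.map Prod.fst).sum = m * v + wv + b.1 →
      (∀ p : Fin m, ∃ (hp₁ : g p < l₁.length) (hp₂ : g p < l₂.length),
        l₁.get ⟨g p, hp₁⟩ = l₂.get ⟨g p, hp₂⟩ ∧ (l₁.get ⟨g p, hp₁⟩).1 = v ∧
        l₁.take (g p) = l₂.take (g p)) →
      ∃ l : List GTMItem,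
        l.length = n ∧
        (l.map Prod.snd).Nodup ∧
        l.Pairwise (fun u u' => P u' < P u) ∧
        (1 / 2 - ε) * (n : ℝ) ≤
          ((Finset.univ.filter (fun i : Fin l.length =>
            D (l.take (i : ℕ)) (l.get i) ≠ gtmCorrect l (l.get i))).card : ℝ) := by
    intro l₁ l₂ g hginj hlen₁ hlen₂ hnd₁ hnd₂ hpw₁ hpw₂ hsum₁ hsum₂ hdata
    have hg₁ : ∀ p : Fin m, g p < l₁.length := fun p => (hdata p).1
    have hg₂ : ∀ p : Fin m, g p < l₂.length := fun p => (hdata p).2.1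
    have hlen₁ℚ : (l₁.length : ℚ) = (m : ℚ) + 2 := by rw [hlen₁]; push_cast; ring
    have hlen₂ℚ : (l₂.length : ℚ) = (m : ℚ) + 2 := by rw [hlen₂]; push_cast; ring
    have hm2pos : (0 : ℚ) < (m : ℚ) + 2 := by positivity
    have hmean₁ : gtmMean l₁ < v := by
      rw [gtmMean, hsum₁, hlen₁ℚ, div_lt_iff₀ hm2pos]
      have hx : v * ((m : ℚ) + 2) = (m : ℚ) * v + 2 * v := by ring
      rw [hx, hwvdef]
      linarith [hc1]
    have hmean₂ : v < gtmMean l₂ := by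
      rw [gtmMean, hsum₂, hlen₂ℚ, lt_div_iff₀ hm2pos]
      have hx : v * ((m : ℚ) + 2) = (m : ℚ) * v + 2 * v := by ring
      rw [hx, hwvdef]
      linarith [hc2]
    have hcor₁ : ∀ x : GTMItem, x.1 = v → gtmCorrect l₁ x = true := by
      intro x hx
      rw [gtmCorrect, hx]
      exact decide_eq_true hmean₁
    have hcor₂ : ∀ x : GTMItem, x.1 = v → gtmCorrect l₂ x = false := by
      intro x hx
      rw [gtmCorrect, hx]
      exact decide_eq_false (not_lt.2 hmean₂.le)
    have hcount := GTMAux.count_aux D l₁ l₂ g hginj hg₁ hg₂ ?_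
    · set c₁ := (Finset.univ.filter (fun i : Fin l₁.length =>
          D (l₁.take (i : ℕ)) (l₁.get i) ≠ gtmCorrect l₁ (l₁.get i))).card with hc₁def
      set c₂ := (Finset.univ.filter (fun i : Fin l₂.length =>
          D (l₂.take (i : ℕ)) (l₂.get i) ≠ gtmCorrect l₂ (l₂.get i))).card with hc₂def
      have hmr : (m : ℝ) + 2 = (n : ℝ) := by exact_mod_cast congrArg (Nat.cast : ℕ → ℝ) hmn
      by_cases hcc : c₂ ≤ c₁
      · refine ⟨l₁, by omega, hnd₁, hpw₁, ?_⟩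
        have h2c : (m : ℝ) ≤ 2 * (c₁ : ℝ) := by
          have : m ≤ 2 * c₁ := by omega
          exact_mod_cast this
        nlinarith [hεn, h2c, hmr]
      · refine ⟨l₂, by omega, hnd₂, hpw₂, ?_⟩
        have h2c : (m : ℝ) ≤ 2 * (c₂ : ℝ) := by
          have : m ≤ 2 * c₂ := by omega
          exact_mod_cast this
        nlinarith [hεn, h2c, hmr]
    · intro p
      obtain ⟨hp₁, hp₂, hget, hfst, htake⟩ := hdata p
      refine ⟨hget, htake, hcor₁ _ hfst, hcor₂ _ ?_⟩
      rw [← hget]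
      exact hfst
  -- helpers for nodup and sum given permutation shape
  have hlmsnd : (lm.map Prod.snd).Nodup := by
    apply List.Nodup.map_on ?_ hlmnd
    intro x hx y hy hxy
    obtain ⟨i, rfl⟩ := hlmmem x hx
    obtain ⟨j, rfl⟩ := hlmmem y hy
    exact congrArg Mfun (he hxy)
  have hndhelp : ∀ (t : GTMItem) (l : List GTMItem), (∀ i : Fin m, t.2 ≠ e i) → t.2 ≠ jw →
      l.Perm (W :: (lm ++ [t])) → (l.map Prod.snd).Nodup := by
    intro t l hte htjw hperm
    have h1 : (l.map Prod.snd).Perm ((W :: (lm ++ [t])).map Prod.snd) := hperm.map _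
    rw [h1.nodup_iff]
    rw [List.map_cons, List.map_append]
    rw [List.nodup_cons]
    constructor
    · intro hmem
      rcases List.mem_append.1 hmem with hmem | hmem
      · obtain ⟨x, hx, hx2⟩ := List.mem_map.1 hmem
        obtain ⟨i, rfl⟩ := hlmmem x hx
        exact hjwe i hx2
      · simp only [List.map_cons, List.map_nil, List.mem_singleton] at hmem
        exact htjw hmem.symm
    · rw [List.nodup_append]
      refine ⟨hlmsnd, List.nodup_singleton _, ?_⟩
      intro y hy z hy2 hyz
      subst hyz
      obtain ⟨x, hx, hx2⟩ := List.mem_map.1 hy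
      obtain ⟨i, rfl⟩ := hlmmem x hx
      simp only [List.map_cons, List.map_nil, List.mem_singleton] at hy2
      exact hte i (by rw [← hy2, ← hx2])
  have hsumhelp : ∀ (t : GTMItem) (l : List GTMItem), l.Perm (W :: (lm ++ [t])) →
      (l.map Prod.fst).sum = m * v + wv + t.1 := by
    intro t l hperm
    have h1 := (hperm.map Prod.fst).sum_eq
    rw [h1, List.map_cons, List.map_append, List.sum_cons, List.sum_append, hlmsum]
    simp only [List.map_cons, List.map_nil, List.sum_cons, List.sum_nil]
    show W.1 + (↑m * v + (t.1 + 0)) = ↑m * v + wv + t.1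
    rw [hWdef]
    ring
  by_cases hw : ∀ x ∈ lm, P W < P x
  · -- W below all majority items: lists are lm ++ (two-element suffix)
    have mk : ∀ t : GTMItem, t ≠ W → (∀ x ∈ lm, P t < P x) →
        ∃ suf : List GTMItem, suf.Perm [W, t] ∧ suf.Pairwise (fun u u' => P u' < P u) := by
      intro t htW htlm
      by_cases hc : P W < P t
      · refine ⟨[t, W], List.Perm.swap _ _ _, ?_⟩
        constructor
        · intro y hy
          simp only [List.mem_singleton] at hy
          subst hy
          exact hc
        · exact List.pairwise_singleton _ _
      · have hc2 : P t < P W := lt_of_le_of_ne (not_lt.1 hc) fun h => htW (hP h)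
        refine ⟨[W, t], List.Perm.refl _, ?_⟩
        constructor
        · intro y hy
          simp only [List.mem_singleton] at hy
          subst hy
          exact hc2
        · exact List.pairwise_singleton _ _
    obtain ⟨sufa, hsufaP, hsufapw⟩ := mk a haW hlma
    obtain ⟨sufb, hsufbP, hsufbpw⟩ := mk b hbW hlmb
    set l₁ : List GTMItem := lm ++ sufa with hl₁def
    set l₂ : List GTMItem := lm ++ sufb with hl₂def
    have hsufalen : sufa.length = 2 := by rw [hsufaP.length_eq]; rfl
    have hsufblen : sufb.length = 2 := by rw [hsufbP.length_eq]; rfl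
    have hlen₁ : l₁.length = m + 2 := by
      rw [hl₁def, List.length_append, hlmlen, hsufalen]
    have hlen₂ : l₂.length = m + 2 := by
      rw [hl₂def, List.length_append, hlmlen, hsufblen]
    have hperm₁ : l₁.Perm (W :: (lm ++ [a])) := by
      refine (List.Perm.append_left lm hsufaP).trans ?_
      exact List.perm_middle
    have hperm₂ : l₂.Perm (W :: (lm ++ [b])) := by
      refine (List.Perm.append_left lm hsufbP).trans ?_
      exact List.perm_middle
    have hpw₁ : l₁.Pairwise (fun u u' => P u' < P u) := by
      rw [hl₁def, List.pairwise_append]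
      refine ⟨hlmpair, hsufapw, ?_⟩
      intro x hx y hy
      have hy2 : y = W ∨ y = a := by simpa using hsufaP.subset hy
      rcases hy2 with rfl | rfl
      · exact hw x hx
      · exact hlma x hx
    have hpw₂ : l₂.Pairwise (fun u u' => P u' < P u) := by
      rw [hl₂def, List.pairwise_append]
      refine ⟨hlmpair, hsufbpw, ?_⟩
      intro x hx y hy
      have hy2 : y = W ∨ y = b := by simpa using hsufbP.subset hy
      rcases hy2 with rfl | rfl
      · exact hw x hx
      · exact hlmb x hx
    refine finish l₁ l₂ (fun p => (p : ℕ)) (fun p q h => Fin.ext h) hlen₁ hlen₂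
      (hndhelp a l₁ hia hjwa hperm₁) (hndhelp b l₂ hib hjwb hperm₂) hpw₁ hpw₂
      (hsumhelp a l₁ hperm₁) (hsumhelp b l₂ hperm₂) ?_
    intro p
    have hplm : (p : ℕ) < lm.length := by rw [hlmlen]; exact p.2
    have hp₁ : (p : ℕ) < l₁.length := by rw [hlen₁]; omega
    have hp₂ : (p : ℕ) < l₂.length := by rw [hlen₂]; omega
    have hget₁ : l₁.get ⟨(p : ℕ), hp₁⟩ = lm.get ⟨(p : ℕ), hplm⟩ := by
      rw [List.get_eq_getElem, List.get_eq_getElem]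
      exact List.getElem_append_left hplm
    have hget₂ : l₂.get ⟨(p : ℕ), hp₂⟩ = lm.get ⟨(p : ℕ), hplm⟩ := by
      rw [List.get_eq_getElem, List.get_eq_getElem]
      exact List.getElem_append_left hplm
    refine ⟨hp₁, hp₂, hget₁.trans hget₂.symm, ?_, ?_⟩
    · rw [hget₁]
      exact hlmfst _ (List.get_mem lm ⟨_, hplm⟩)
    · rw [hl₁def, hl₂def, List.take_append_of_le_length (le_of_lt hplm),
        List.take_append_of_le_length (le_of_lt hplm)]
  · -- W is above some majority item
    push_neg at hw
    obtain ⟨x₀, hx₀lm, hx₀⟩ := hw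
    have hx₀' : ¬ P W < P x₀ := not_lt.2 hx₀
    have hWx₀ : P x₀ < P W :=
      lt_of_le_of_ne hx₀ fun h => (hlmW x₀ hx₀lm) (hP h)
    have haWlt : P a < P W := lt_trans (hlma x₀ hx₀lm) hWx₀
    have hbWlt : P b < P W := lt_trans (hlmb x₀ hx₀lm) hWx₀
    set qW : GTMItem → Bool := fun y => decide (P W < P y) with hqWdef
    set tw : List GTMItem := lm.takeWhile qW with htwdef'
    set dw : List GTMItem := lm.dropWhile qW with hdwdef'
    set k : ℕ := tw.length with hkdef
    have htwdw : tw ++ dw = lm := List.takeWhile_append_dropWhile (p := qW) (l := lm)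
    have hktake : tw = lm.take k := by
      rw [hkdef]
      exact List.prefix_iff_eq_take.1 (List.takeWhile_prefix _)
    have hkd : dw = lm.drop k := by
      rw [← htwdw, hkdef, List.drop_left]
    have hkm : k ≤ m := by
      rw [hkdef, ← hlmlen]
      exact (List.takeWhile_prefix _).length_le
    have hklen : k + dw.length = m := by
      have := congrArg List.length htwdw
      rw [List.length_append, hlmlen] at this
      omega
    have htwmem : ∀ y ∈ tw, P W < P y := by
      intro y hy
      have := List.mem_takeWhile_imp hy
      rw [hqWdef] at this
      exact of_decide_eq_true this
    have htwsub : ∀ y ∈ tw, y ∈ lm := fun y hy => (List.takeWhile_prefix _).subset hy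
    have hdwsub : ∀ y ∈ dw, y ∈ lm := fun y hy => (List.dropWhile_suffix _).subset hy
    have hdwmem : ∀ y ∈ dw, P y < P W := by
      have hdnn : dw ≠ [] := by
        intro h
        have : tw = lm := by rw [← htwdw, h, List.append_nil]
        exact absurd (htwmem x₀ (this ▸ hx₀lm)) hx₀'
      have hdnn' : lm.dropWhile qW ≠ [] := hdwdef' ▸ hdnn
      have hd : qW (dw.head hdnn) = false := List.head_dropWhile_not qW hdnn'
      have hdP : ¬ P W < P (dw.head hdnn) := by
        rw [hqWdef] at hd
        exact of_decide_eq_false hd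
      have hdmem : dw.head hdnn ∈ dw := List.head_mem hdnn
      have hdW : P (dw.head hdnn) < P W :=
        lt_of_le_of_ne (not_lt.1 hdP) fun h => (hlmW _ (hdwsub _ hdmem)) (hP h)
      have hdwpw : dw.Pairwise (fun u u' => P u' < P u) := by
        refine hlmpair.sublist ?_
        rw [hdwdef']
        exact List.dropWhile_sublist _
      have hcons : dw = dw.head hdnn :: dw.tail := (List.cons_head_tail hdnn).symm
      intro y hy
      rcases List.mem_cons.1 (hcons ▸ hy) with heq | hyt
      · rw [heq]
        exact hdW
      · have h2 := (List.pairwise_cons.1 (hcons ▸ hdwpw)).1 y hyt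
        exact lt_trans h2 hdW
    set lcw : List GTMItem := tw ++ W :: dw with hlcwdef
    have hlcwlen : lcw.length = m + 1 := by
      rw [hlcwdef, List.length_append, List.length_cons]
      omega
    have hlmpair' : (tw ++ dw).Pairwise (fun u u' => P u' < P u) := by
      rw [htwdw]
      exact hlmpair
    obtain ⟨htwpw, hdwpw2, hcross⟩ := List.pairwise_append.1 hlmpair'
    have hlcwpw : lcw.Pairwise (fun u u' => P u' < P u) := by
      rw [hlcwdef, List.pairwise_append]
      refine ⟨htwpw, ?_, ?_⟩
      · rw [List.pairwise_cons]
        exact ⟨hdwmem, hdwpw2⟩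
      · intro x hx y hy
        rcases List.mem_cons.1 hy with rfl | hy2
        · exact htwmem x hx
        · exact hcross x hx y hy2
    have hlcwmem : ∀ x ∈ lcw, x ∈ lm ∨ x = W := by
      intro x hx
      rw [hlcwdef] at hx
      rcases List.mem_append.1 hx with hx | hx
      · exact Or.inl (htwsub x hx)
      · rcases List.mem_cons.1 hx with rfl | hx2
        · exact Or.inr rfl
        · exact Or.inl (hdwsub x hx2)
    have hlcwperm : lcw.Perm (W :: lm) := by
      rw [hlcwdef]
      refine List.perm_middle.trans ?_
      rw [htwdw]
    set l₁ : List GTMItem := lcw ++ [a] with hl₁def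
    set l₂ : List GTMItem := lcw ++ [b] with hl₂def
    have hlen₁ : l₁.length = m + 2 := by
      rw [hl₁def, List.length_append, hlcwlen]
      rfl
    have hlen₂ : l₂.length = m + 2 := by
      rw [hl₂def, List.length_append, hlcwlen]
      rfl
    have hbelow : ∀ (t : GTMItem), (∀ x ∈ lm, P t < P x) → P t < P W → ∀ x ∈ lcw, P t < P x := by
      intro t h1' h2' x hx
      rcases hlcwmem x hx with hx | rfl
      · exact h1' x hx
      · exact h2'
    have hpw₁ : l₁.Pairwise (fun u u' => P u' < P u) := by
      rw [hl₁def, List.pairwise_append]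
      refine ⟨hlcwpw, List.pairwise_singleton _ _, ?_⟩
      intro x hx y hy
      rw [List.mem_singleton] at hy
      rw [hy]
      exact hbelow a hlma haWlt x hx
    have hpw₂ : l₂.Pairwise (fun u u' => P u' < P u) := by
      rw [hl₂def, List.pairwise_append]
      refine ⟨hlcwpw, List.pairwise_singleton _ _, ?_⟩
      intro x hx y hy
      rw [List.mem_singleton] at hy
      rw [hy]
      exact hbelow b hlmb hbWlt x hx
    have hperm₁ : l₁.Perm (W :: (lm ++ [a])) := by
      rw [hl₁def]
      refine (hlcwperm.append_right [a]).trans ?_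
      rw [List.cons_append]
    have hperm₂ : l₂.Perm (W :: (lm ++ [b])) := by
      rw [hl₂def]
      refine (hlcwperm.append_right [b]).trans ?_
      rw [List.cons_append]
    set g : Fin m → ℕ := fun p => if (p : ℕ) < k then (p : ℕ) else (p : ℕ) + 1 with hgdef
    have hginj : Function.Injective g := by
      intro p q hpq
      apply Fin.ext
      rw [hgdef] at hpq
      simp only at hpq
      split_ifs at hpq <;> omega
    have hgb : ∀ p : Fin m, g p < m + 1 := by
      intro p
      have := p.2
      rw [hgdef]
      simp only
      split_ifs with h
      · omega
      · omega
    have hgetq : ∀ p : Fin m, lcw[(g p)]? = lm[(p : ℕ)]? := by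
      intro p
      rw [hlcwdef, hgdef]
      simp only
      split_ifs with h
      · rw [List.getElem?_append_left (by rw [← hkdef]; exact h)]
        rw [hktake]
        exact List.getElem?_take_of_lt h
      · have hk2 : k ≤ (p : ℕ) + 1 := by omega
        rw [List.getElem?_append_right (by rw [← hkdef]; exact hk2)]
        rw [show (p : ℕ) + 1 - tw.length = ((p : ℕ) - k) + 1 from by rw [← hkdef]; omega]
        rw [List.getElem?_cons_succ]
        rw [hkd, List.getElem?_drop]
        congr 1
        omega
    have hdata : ∀ p : Fin m, ∃ (hp₁ : g p < l₁.length) (hp₂ : g p < l₂.length),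
        l₁.get ⟨g p, hp₁⟩ = l₂.get ⟨g p, hp₂⟩ ∧ (l₁.get ⟨g p, hp₁⟩).1 = v ∧
        l₁.take (g p) = l₂.take (g p) := by
      intro p
      have hplm : (p : ℕ) < lm.length := by rw [hlmlen]; exact p.2
      have hp₁ : g p < l₁.length := by rw [hlen₁]; have := hgb p; omega
      have hp₂ : g p < l₂.length := by rw [hlen₂]; have := hgb p; omega
      have hplcw : g p < lcw.length := by rw [hlcwlen]; exact hgb p
      have hq₁ : l₁[(g p)]? = lm[(p : ℕ)]? := by
        rw [hl₁def, List.getElem?_append_left hplcw]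
        exact hgetq p
      have hq₂ : l₂[(g p)]? = lm[(p : ℕ)]? := by
        rw [hl₂def, List.getElem?_append_left hplcw]
        exact hgetq p
      have hget₁ : l₁.get ⟨g p, hp₁⟩ = lm.get ⟨(p : ℕ), hplm⟩ := by
        have h1 : l₁[(g p)]? = some (l₁.get ⟨g p, hp₁⟩) := by
          rw [List.getElem?_eq_getElem hp₁]
          rfl
        have h2 : lm[(p : ℕ)]? = some (lm.get ⟨(p : ℕ), hplm⟩) := by
          rw [List.getElem?_eq_getElem hplm]
          rfl
        rw [h1, h2] at hq₁
        exact Option.some.inj hq₁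
      have hget₂ : l₂.get ⟨g p, hp₂⟩ = lm.get ⟨(p : ℕ), hplm⟩ := by
        have h1 : l₂[(g p)]? = some (l₂.get ⟨g p, hp₂⟩) := by
          rw [List.getElem?_eq_getElem hp₂]
          rfl
        have h2 : lm[(p : ℕ)]? = some (lm.get ⟨(p : ℕ), hplm⟩) := by
          rw [List.getElem?_eq_getElem hplm]
          rfl
        rw [h1, h2] at hq₂
        exact Option.some.inj hq₂
      refine ⟨hp₁, hp₂, hget₁.trans hget₂.symm, ?_, ?_⟩
      · rw [hget₁]
        exact hlmfst _ (List.get_mem lm ⟨_, hplm⟩)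
      · rw [hl₁def, hl₂def, List.take_append_of_le_length (le_of_lt hplcw),
          List.take_append_of_le_length (le_of_lt hplcw)]
    exact finish l₁ l₂ g hginj hlen₁ hlen₂
      (hndhelp a l₁ hia hjwa hperm₁) (hndhelp b l₂ hib hjwb hperm₂) hpw₁ hpw₂
      (hsumhelp a l₁ hperm₁) (hsumhelp b l₂ hperm₂) hdata
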